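/- Parity of renormalized vertex weights: let (a,b,c) be an admissible triple of half-integers and u,v,t half-integers with |u| ≤ a, |v| ≤ b, |t| ≤ c, u−a, v−b, t−c ∈ ℤ and u+v+t = 0. Then the renormalized coefficient NW^{a,b,c}_{u,v,t} := W^{a,b,c}_{u,v,t} / ([a+b−c]! [b+c−a]! [c+a−b]!) satisfies i^{a+b+c} · NW^{a,b,c}_{u,v,t} ∈ q^{ε/2} · ℤ[q, q^{−1}], where ε ∈ {0,1} satisfies ε ≡ a(a+1) − u(u+1) + b(b+1) − v(v+1) + c(c+1) − t(t+1) (mod 2); in particular the parity of the powers of q^{1/2} occurring in i^{a+b+c} · NW^{a,b,c}_{u,v,t} does not depend on the choice of summation indices in its defining formula. -/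

import Mathlib

noncomputable section
open scoped Classical

namespace QSpin

/-- The ambient field: rational functions over `ℂ` (which contains `ℚ(i)`),
in a variable `X` which represents the formal fourth root `q^(1/4)`. -/
abbrev K : Type := RatFunc ℂ

/-- `X` represents `q^(1/4)`. -/
def X : K := RatFunc.X

/-- The quantum variable `q = X^4`. -/
def q : K := X ^ 4

/-- `i = √-1`, as a constant of `K`. -/
def ii : K := RatFunc.C Complex.I

/-- `q` raised to a rational power `r` (meaningful whenever `4 * r ∈ ℤ`). -/
def qpow (r : ℚ) : K := X ^ (4 * r).num

/-- Half of an integer, as a rational number: a half-integer is encoded by its double. -/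
def hf (n : ℤ) : ℚ := (n : ℚ) / 2

/-- Integer powers of `i`. -/
def ipow (n : ℤ) : K := ii ^ n

/-- Integer powers of `-1`. -/
def m1pow (n : ℤ) : K := (-1 : K) ^ n

/-- The quantum integer `[n] = (q^n - q^(-n))/(q - q⁻¹)`. -/
def qint (n : ℤ) : K := (q ^ n - q ^ (-n)) / (q - q⁻¹)

/-- The quantum factorial `[n]!`. -/
def qfact (n : ℕ) : K := ∏ j ∈ Finset.range n, qint (j + 1)

/-- The quantum factorial of an integer (zero for negative arguments). -/
def qfactz (n : ℤ) : K := if 0 ≤ n then qfact n.toNat else 0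

/-- The quantum binomial `[n choose k]`, vanishing unless `0 ≤ k ≤ n`. -/
def qbin (n k : ℤ) : K :=
  if 0 ≤ k ∧ k ≤ n then qfactz n / (qfactz k * qfactz (n - k)) else 0

/-- Admissibility of a triple of half-integers (encoded by their doubles):
all nonnegative, total sum an integer (i.e. the sum of the doubles is even), and
the triangular inequalities hold. -/
def Adm (a b c : ℤ) : Prop :=
  0 ≤ a ∧ 0 ≤ b ∧ 0 ≤ c ∧ 2 ∣ (a + b + c) ∧ c ≤ a + b ∧ a ≤ b + c ∧ b ≤ c + a

/-- The quantum Clebsch-Gordan coefficient `C^{a,b,c}_{u,v,t}`; all six half-integer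
parameters are encoded by their doubles. -/
def CG (a b c u v t : ℤ) : K :=
  if u + v = t then
    ipow ((c - a - b) / 2) * m1pow ((b - v) / 2 - (c - t) / 2) *
      qpow ((hf b - hf v) * (hf b + hf v + 1) / 2 - (hf a - hf u) * (hf a + hf u + 1) / 2) *
      (qfactz ((a + b - c) / 2) * qfactz ((b + c - a) / 2) * qfactz ((c + a - b) / 2) /
        qfactz c) *
      ∑ z ∈ Finset.range (((c - t) / 2).toNat + 1),
        m1pow z *
          qpow (((z : ℚ) - (((c - t) / 2 - (z : ℤ) : ℤ) : ℚ)) * (hf c + hf t + 1) / 2) *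
          qbin ((a + u) / 2 + z) ((a + c - b) / 2) *
          qbin ((b + v) / 2 + ((c - t) / 2 - (z : ℤ))) ((b + c - a) / 2) *
          qbin ((c - t) / 2) z
  else 0

/-- The coefficient `W^{a,b,c}_{u,v,t} = C^{a,b,c}_{u,v,-t} · i^{-2t} q^{-t} · [2c]!`. -/
def W (a b c u v t : ℤ) : K := CG a b c u v (-t) * ipow (-t) * qpow (-(hf t)) * qfactz c

/-- The coefficient `P^{a,b,c}_{u,v,t} = C^{a,c,b}_{-u,t,v} · i^{2u} q^{u} / [2a]!`. -/
def Pc (a b c u v t : ℤ) : K := CG a c b (-u) t v * ipow u * qpow (hf u) / qfactz a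

/-- The coefficient `M^{a,b,c}_{u,v,t} = P^{a,b,c}_{u,v,-t} · i^{-2t} q^{-t} / [2c]!`. -/
def M (a b c u v t : ℤ) : K := Pc a b c u v (-t) * ipow (-t) * qpow (-(hf t)) / qfactz c


/-- The renormalized vertex coefficient
`NW^{a,b,c}_{u,v,t} = W^{a,b,c}_{u,v,t} / ([a+b−c]! [b+c−a]! [c+a−b]!)`. -/
def NW (a b c u v t : ℤ) : K :=
  W a b c u v t /
    (qfactz ((a + b - c) / 2) * qfactz ((b + c - a) / 2) * qfactz ((c + a - b) / 2))

lemma X_ne_zero : (X : K) ≠ 0 := by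
  simpa [X] using RatFunc.X_ne_zero (K := ℂ)

lemma q_ne_zero : (q : K) ≠ 0 := pow_ne_zero _ X_ne_zero

lemma X_pow_ne_one (n : ℕ) (hn : n ≠ 0) : (X : K) ^ n ≠ 1 := by
  intro h
  have h2 : (algebraMap (Polynomial ℂ) K) (Polynomial.X ^ n) = (algebraMap (Polynomial ℂ) K) 1 := by
    simpa [X, map_pow, RatFunc.algebraMap_X] using h
  have := RatFunc.algebraMap_injective (K := ℂ) h2
  have hdeg := congrArg Polynomial.natDegree this
  simp [Polynomial.natDegree_X_pow] at hdeg
  exact hn hdeg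

lemma qsub_ne_zero : (q : K) - q⁻¹ ≠ 0 := by
  intro h
  have h1 : (q : K) = q⁻¹ := sub_eq_zero.mp h
  have h2 : (q : K) * q = 1 := by
    nth_rewrite 1 [h1]
    exact inv_mul_cancel₀ q_ne_zero
  have : (X : K) ^ 8 = 1 := by
    have : ((X:K)^4) * ((X:K)^4) = 1 := h2
    calc (X:K)^8 = (X:K)^4 * (X:K)^4 := by ring
    _ = 1 := this
  exact X_pow_ne_one 8 (by norm_num) this

lemma qint_ne_zero (n : ℤ) (hn : 1 ≤ n) : qint n ≠ 0 := by
  rw [qint, div_ne_zero_iff]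
  refine ⟨?_, qsub_ne_zero⟩
  intro h
  have h1 : (q : K) ^ n = q ^ (-n) := sub_eq_zero.mp h
  have h2 : (q : K) ^ (n + n) = 1 := by
    rw [zpow_add₀ q_ne_zero]
    nth_rewrite 1 [h1]
    rw [← zpow_add₀ q_ne_zero, neg_add_cancel, zpow_zero]
  have h3 : (q:K) ^ (n + n) = (q:K) ^ ((n+n).toNat : ℤ) := by
    congr 1; omega
  rw [h3, zpow_natCast] at h2
  have h4 : ((X:K)^4) ^ (n+n).toNat = (X:K) ^ (4 * (n+n).toNat) := by
    rw [← pow_mul]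
  rw [q, h4] at h2
  exact X_pow_ne_one _ (by omega) h2

lemma qfact_ne_zero (n : ℕ) : qfact n ≠ 0 := by
  rw [qfact]
  refine Finset.prod_ne_zero_iff.mpr ?_
  intro j _
  exact qint_ne_zero _ (by omega)

lemma qfactz_ne_zero (n : ℤ) (hn : 0 ≤ n) : qfactz n ≠ 0 := by
  rw [qfactz, if_pos hn]; exact qfact_ne_zero _

/-- The Laurent polynomial subring. -/
def R : Subring K := Subring.closure ({q, q⁻¹} : Set K)

lemma q_mem : (q : K) ∈ R := Subring.subset_closure (by simp)
lemma qinv_mem : (q⁻¹ : K) ∈ R := Subring.subset_closure (by simp)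

lemma qz_mem (n : ℤ) : (q : K) ^ n ∈ R := by
  rcases n with p | p
  · simpa using pow_mem q_mem p
  · rw [zpow_negSucc, ← inv_pow]
    exact pow_mem qinv_mem _

lemma m1pow_mem (n : ℤ) : m1pow n ∈ R := by
  rcases Int.even_or_odd n with h | h
  · rw [m1pow, h.neg_one_zpow]; exact one_mem _
  · rw [m1pow, h.neg_one_zpow]; exact neg_mem (one_mem _)

lemma key_pascal (M A : ℤ) :
    (q:K)^M - q^(-M) = q^A * (q^(M-A) - q^(A-M)) + q^(A-M) * (q^A - q^(-A)) := by
  rw [mul_sub, mul_sub, ← zpow_add₀ q_ne_zero, ← zpow_add₀ q_ne_zero,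
    ← zpow_add₀ q_ne_zero, ← zpow_add₀ q_ne_zero,
    show A + (M - A) = M by ring, show A + (A - M) = A - M + A by ring,
    show A - M + -A = -M by ring]
  ring

lemma qint_pascal (M A : ℤ) :
    qint M = q^A * qint (M - A) + q^(A-M) * qint A := by
  rw [qint, qint, qint, show -(M - A) = A - M by ring, ← mul_div_assoc, ← mul_div_assoc,
    ← add_div, key_pascal M A]

/-- natural-number q-binomial -/
def qbinN (n k : ℕ) : K := qfact n / (qfact k * qfact (n - k))

lemma qfact_succ (n : ℕ) : qfact (n + 1) = qfact n * qint (n + 1) := by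
  rw [qfact, qfact, Finset.prod_range_succ]

lemma qbinN_mem : ∀ n k : ℕ, k ≤ n → qbinN n k ∈ R := by
  intro n
  induction n with
  | zero =>
    intro k hk
    interval_cases k
    simp [qbinN, qfact]
  | succ m ih =>
    intro k hk
    rcases Nat.eq_zero_or_pos k with h0 | h0
    · subst h0
      have h00 : qfact 0 = 1 := by simp [qfact]
      rw [qbinN, Nat.sub_zero, h00, one_mul, div_self (qfact_ne_zero _)]
      exact one_mem _
    rcases eq_or_lt_of_le hk with he | hlt
    · subst he
      have h00 : qfact 0 = 1 := by simp [qfact]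
      rw [qbinN, Nat.sub_self, h00, mul_one, div_self (qfact_ne_zero _)]
      exact one_mem _
    -- 1 ≤ k ≤ m
    obtain ⟨k', rfl⟩ : ∃ k', k = k' + 1 := ⟨k - 1, by omega⟩
    have hk'm : k' + 1 ≤ m := by omega
    have hrec : qbinN (m+1) (k'+1)
        = q^((k':ℤ)+1) * qbinN m (k'+1) + q^(((k':ℤ)+1)-((m:ℤ)+1)) * qbinN m k' := by
      have e1 : qfact (m+1) = qfact m * qint ((m:ℤ) + 1) := qfact_succ m
      have e2 : qfact (k'+1) = qfact k' * qint ((k':ℤ) + 1) := qfact_succ k'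
      have e3 : qfact (m - k') = qfact (m - k' - 1) * qint ((m:ℤ) - k') := by
        have h4 : m - k' = (m - k' - 1) + 1 := by omega
        rw [h4, qfact_succ]
        congr 2
        push_cast
        omega
      have scalar := qint_pascal ((m:ℤ)+1) ((k':ℤ)+1)
      rw [show (m:ℤ) + 1 - ((k':ℤ)+1) = (m:ℤ) - k' by ring] at scalar
      rw [qbinN, qbinN, qbinN, show m + 1 - (k' + 1) = m - k' by omega,
        show m - (k' + 1) = m - k' - 1 by omega, e1, e2, e3, scalar]
      have n1 := qfact_ne_zero m
      have n2 := qfact_ne_zero k'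
      have n3 := qfact_ne_zero (m - k' - 1)
      have n4 := qint_ne_zero ((k':ℤ)+1) (by omega)
      have n5 := qint_ne_zero ((m:ℤ) - k') (by push_cast; omega)
      field_simp
    rw [hrec]
    exact add_mem (mul_mem (qz_mem _) (ih _ hk'm))
      (mul_mem (qz_mem _) (ih _ (by omega)))

lemma qbin_mem (n k : ℤ) : qbin n k ∈ R := by
  rw [qbin]
  split_ifs with h
  · obtain ⟨h1, h2⟩ := h
    have e : qbin n k = qbinN n.toNat k.toNat := by
      rw [qbin, if_pos ⟨h1, h2⟩, qbinN, qfactz, qfactz, qfactz,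
        if_pos (by omega : (0:ℤ) ≤ n), if_pos h1, if_pos (by omega : (0:ℤ) ≤ n - k),
        show (n - k).toNat = n.toNat - k.toNat from by omega]
    rw [qbin, if_pos ⟨h1, h2⟩] at e
    rw [e]
    exact qbinN_mem _ _ (by omega)
  · exact zero_mem _

lemma ii_ne_zero : (ii : K) ≠ 0 := by
  intro hc
  rw [ii] at hc
  exact Complex.I_ne_zero
    (by simpa using (RingHom.injective (RatFunc.C : ℂ →+* RatFunc ℂ)) (hc.trans (map_zero _).symm))

lemma ii_sq : (ii : K) ^ 2 = -1 := by
  rw [ii, sq, ← map_mul, Complex.I_mul_I, map_neg, map_one]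

lemma ipow_two_mul (n : ℤ) : ipow (2 * n) = m1pow n := by
  have h2 : (ii:K)^(2:ℤ) = -1 := by
    rw [show (2:ℤ) = ((2:ℕ):ℤ) from rfl, zpow_natCast, ii_sq]
  rw [ipow, m1pow, zpow_mul, h2]

lemma qpow_eq (r : ℚ) (m : ℤ) (h : 4 * r = (m : ℚ)) : qpow r = X ^ m := by
  rw [qpow, h, Rat.num_intCast]

lemma q_zpow_X (m : ℤ) : (q : K) ^ m = X ^ (4 * m) := by
  rw [q, show ((X:K)^4) = X^((4:ℕ):ℤ) from (zpow_natCast X 4).symm, ← zpow_mul]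
  norm_num

/-- the exponent of `q` in the `z`-th term of the renormalized sum -/
def mExp (u t α γ k : ℤ) (z : ℕ) : ℤ :=
  (z:ℤ)*(γ+1) - α*(u+α+1) - t*γ - γ^2 - γ - t - k

lemma main_eq (a b c u v t α β γ k : ℤ) (ε : ℕ)
    (hsum : u + v = -t)
    (ha : a = u + 2*α) (hb : b = v + 2*β) (hc : c = t + 2*γ)
    (hQ1 : 0 ≤ (a + b - c)/2) (hQ2 : 0 ≤ (b + c - a)/2) (hQ3 : 0 ≤ (c + a - b)/2)
    (hQc : 0 ≤ c)
    (hd1 : (a + b + c)/2 = α + β + γ)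
    (hd2 : (c - a - b)/2 = t + γ - α - β)
    (hd3 : (b - v)/2 = β)
    (hd4 : (c - -t)/2 = t + γ)
    (hd5 : (a + u)/2 = u + α)
    (hd6 : (a + c - b)/2 = α + γ - β - v)
    (hd7 : (b + v)/2 = v + β)
    (hd8 : (b + c - a)/2 = β + γ - α - u)
    (hε : (ε:ℤ) = α*(u+α+1) + β*(v+β+1) + γ*(t+γ+1) + 2*k) :
    ipow ((a + b + c) / 2) * NW a b c u v t =
      X ^ (2 * ε) *
        (m1pow γ * m1pow (β - (t + γ)) *
          ∑ z ∈ Finset.range ((t+γ).toNat + 1),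
            m1pow z * q ^ (mExp u t α γ k z) *
              qbin ((u + α) + (z:ℤ)) (α + γ - β - v) *
              qbin ((v + β) + ((t + γ) - (z:ℤ))) (β + γ - α - u) *
              qbin (t + γ) z) := by
  have n1 := qfactz_ne_zero _ hQ1
  have n2 := qfactz_ne_zero _ hQ2
  have n3 := qfactz_ne_zero _ hQ3
  have nc := qfactz_ne_zero _ hQc
  rw [NW, W, CG, if_pos hsum]
  have hcan : ∀ y1 y2 y3 y4 : K,
      y1 * (qfactz ((a + b - c)/2) * qfactz ((b + c - a)/2) * qfactz ((c + a - b)/2) /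
        qfactz c) * y2 * y3 * y4 * qfactz c /
        (qfactz ((a + b - c)/2) * qfactz ((b + c - a)/2) * qfactz ((c + a - b)/2))
      = y1 * y2 * y3 * y4 := by
    intros
    field_simp
  rw [hcan]
  simp only [hd1, hd2, hd3, hd4, hd5, hd6, hd7, hd8]
  rw [qpow_eq ((hf b - hf v) * (hf b + hf v + 1) / 2 - (hf a - hf u) * (hf a + hf u + 1) / 2)
      (2*(β*(v+β+1) - α*(u+α+1)))
      (by simp only [hf, ha, hb]; push_cast; ring),
    qpow_eq (-(hf t)) (-2*t) (by simp only [hf]; push_cast; ring)]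
  have hzq : ∀ z : ℕ, qpow (((z : ℚ) - (((t + γ - (z : ℤ) : ℤ)) : ℚ)) * (hf c + hf (-t) + 1) / 2)
      = X ^ (2*(2*(z:ℤ) - (t+γ))*(γ+1)) := by
    intro z
    exact qpow_eq _ _ (by simp only [hf, hc]; push_cast; ring)
  simp only [hzq, Finset.mul_sum, Finset.sum_mul]
  refine Finset.sum_congr rfl fun z hzz => ?_
  have hiis : ipow (α+β+γ) * ipow (t+γ-α-β) * ipow (-t) = m1pow γ := by
    rw [ipow, ipow, ipow, ← zpow_add₀ ii_ne_zero, ← zpow_add₀ ii_ne_zero,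
      show α+β+γ + (t+γ-α-β) + -t = 2*γ by ring]
    exact ipow_two_mul γ
  have hXs : (X:K)^(2*(β*(v+β+1) - α*(u+α+1))) * X^(2*(2*(z:ℤ) - (t+γ))*(γ+1)) * X^(-2*t)
      = X^(((2*ε:ℕ):ℤ)) * X^(4 * mExp u t α γ k z) := by
    rw [← zpow_add₀ X_ne_zero, ← zpow_add₀ X_ne_zero, ← zpow_add₀ X_ne_zero]
    congr 1
    push_cast [hε, mExp]
    ring
  have hscal : ipow (α+β+γ) * ipow (t+γ-α-β) * ipow (-t) *
      ((X:K)^(2*(β*(v+β+1) - α*(u+α+1))) * X^(2*(2*(z:ℤ) - (t+γ))*(γ+1)) * X^(-2*t))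
      = X ^ (2*ε) * (m1pow γ * q ^ (mExp u t α γ k z)) := by
    rw [hiis, hXs, q_zpow_X, ← zpow_natCast X (2*ε)]
    ring
  linear_combination (m1pow (β - (t + γ)) * m1pow (z:ℤ) *
    qbin ((u + α) + (z:ℤ)) (α + γ - β - v) *
    qbin ((v + β) + ((t + γ) - (z:ℤ))) (β + γ - α - u) *
    qbin (t + γ) (z:ℤ)) * hscal

/-- Parity of renormalized vertex weights: for an admissible triple
`(a,b,c)` and weights `u,v,t` with `|u| ≤ a`, `|v| ≤ b`, `|t| ≤ c`,
`u−a, v−b, t−c ∈ ℤ` and `u+v+t = 0`, the element `i^{a+b+c} · NW^{a,b,c}_{u,v,t}`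
lies in `q^{ε/2} · ℤ[q, q^{−1}]` where `ε ∈ {0,1}` satisfies
`ε ≡ a(a+1) − u(u+1) + b(b+1) − v(v+1) + c(c+1) − t(t+1) (mod 2)`.
(Half-integers are encoded by their doubles, so `a(a+1)` becomes `a(a+2)/4` in the
doubled variables, and `X = q^{1/4}` so `q^{ε/2} = X^{2ε}`.) -/
theorem NW_parity (a b c u v t : ℤ) (h : Adm a b c)
    (hu : |u| ≤ a) (hv : |v| ≤ b) (ht : |t| ≤ c)
    (h1 : 2 ∣ (a - u)) (h2 : 2 ∣ (b - v)) (h3 : 2 ∣ (c - t))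
    (hs : u + v + t = 0) :
    ∃ ε : ℕ, ε ≤ 1 ∧
      (ε : ℤ) ≡ (a * (a + 2) - u * (u + 2) + b * (b + 2) - v * (v + 2)
          + c * (c + 2) - t * (t + 2)) / 4 [ZMOD 2] ∧
      ∃ P ∈ Subring.closure ({q, q⁻¹} : Set K),
        ipow ((a + b + c) / 2) * NW a b c u v t = X ^ (2 * ε) * P := by
  obtain ⟨ha0, hb0, hc0, hpar, htr1, htr2, htr3⟩ := h
  obtain ⟨α, hα⟩ := h1
  obtain ⟨β, hβ⟩ := h2
  obtain ⟨γ, hγ⟩ := h3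
  have ha : a = u + 2 * α := by omega
  have hb : b = v + 2 * β := by omega
  have hc : c = t + 2 * γ := by omega
  subst ha hb hc
  set ε0 : ℤ := α*(u+α+1) + β*(v+β+1) + γ*(t+γ+1) with hε0
  refine ⟨(ε0 % 2).toNat, by omega, ?_, ?_⟩
  · have h4 : (u + 2*α) * (u + 2*α + 2) - u * (u + 2) + (v + 2*β) * (v + 2*β + 2) - v * (v + 2)
        + (t + 2*γ) * (t + 2*γ + 2) - t * (t + 2) = 4 * ε0 := by rw [hε0]; ring
    rw [h4, Int.mul_ediv_cancel_left _ (by norm_num)]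
    show _ % 2 = _ % 2
    omega
  · refine ⟨_, ?_, main_eq _ _ _ u v t α β γ (-(ε0/2)) _ (by omega) rfl rfl rfl
      (by omega) (by omega) (by omega) (by omega)
      (by omega) (by omega) (by omega) (by omega) (by omega) (by omega) (by omega) (by omega)
      (by push_cast; omega)⟩
    refine mul_mem (mul_mem (m1pow_mem γ) (m1pow_mem _)) (sum_mem fun z hz => ?_)
    exact mul_mem (mul_mem (mul_mem (mul_mem (m1pow_mem _) (qz_mem _)) (qbin_mem _ _))
      (qbin_mem _ _)) (qbin_mem _ _)


end QSpin
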